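/- arXiv:2209.10799 — 3 statements merged into one kernel-verified Lean document; each statement's English description precedes it below -/
import Mathlib

section
/- Let G be a proper interval graph on vertex set [n] = {1,…,n} and let C_1 and C_2 be minimal vertex covers of G. List the multiset union of C_1 and C_2 (so that each element of C_1 ∩ C_2 occurs twice) in increasing order as i_1 ≤ i_2 ≤ ⋯ ≤ i_k, and set D_1 = {i_ℓ : ℓ odd, 1 ≤ ℓ ≤ k} and D_2 = {i_ℓ : ℓ even, 1 ≤ ℓ ≤ k}. Then D_1 and D_2 are vertex covers of G (not necessarily minimal a priori). -/
/-!
Monomials in `S = K[x_1, …, x_n]` are identified with multisets of (here, natural-number)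
indices. -/

/-- Split a list into the sublist of entries in odd positions (1st, 3rd, 5th, …)
and the sublist of entries in even positions (2nd, 4th, …). -/
def altSplit {α : Type*} : List α → List α × List α
  | [] => ([], [])
  | a :: l => (a :: (altSplit l).2, (altSplit l).1)

/-- The sorting `sort(u,v)` of a pair of monomials: write the product `u*v` as
`x_{i_1} x_{i_2} ⋯ x_{i_t}` with `i_1 ≤ i_2 ≤ ⋯ ≤ i_t`; then `u'` is the product of the
variables in odd positions and `v'` the product of those in even positions. -/
def sortPair {α : Type*} [LinearOrder α] (u v : Multiset α) : Multiset α × Multiset α :=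
  (((altSplit ((u + v).sort (· ≤ ·))).1 : List α), ((altSplit ((u + v).sort (· ≤ ·))).2 : List α))

/-- A pair of monomials is sorted if `sort(u,v) = (u,v)`. -/
def IsSortedPair {α : Type*} [LinearOrder α] (u v : Multiset α) : Prop :=
  sortPair u v = (u, v)

/-- A `q`-tuple of monomials is sorted if `(u_i, u_j)` is a sorted pair for all `i < j`. -/
def IsSortedTuple {α : Type*} [LinearOrder α] {q : ℕ} (u : Fin q → Multiset α) : Prop :=
  ∀ i j : Fin q, i < j → IsSortedPair (u i) (u j)

/-- A `q`-tuple of monomials is sorted of type `(d,r)` if it is sorted, its first `r` entries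
have degree `d+1` and the remaining entries have degree `d`. -/
def IsSortedOfType {α : Type*} [LinearOrder α] {q : ℕ} (u : Fin q → Multiset α)
    (d r : ℕ) : Prop :=
  IsSortedTuple u ∧ ∀ i : Fin q, Multiset.card (u i) = if (i : ℕ) < r then d + 1 else d
/-- `C` is a vertex cover of the graph `G`: it meets every edge. -/
def IsVertexCover {W : Type*} (G : SimpleGraph W) (C : Finset W) : Prop :=
  ∀ a b : W, G.Adj a b → a ∈ C ∨ b ∈ C

/-- `C` is a minimal vertex cover of `G`: it is a vertex cover and no proper subset of `C`
is a vertex cover. -/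
def IsMinVertexCover {W : Type*} (G : SimpleGraph W) (C : Finset W) : Prop :=
  IsVertexCover G C ∧ ∀ D : Finset W, D ⊆ C → IsVertexCover G D → D = C

/-- `G` is a proper interval graph (with respect to the labeling of its vertices by `Fin n`):
for all `i < j` with `{i,j}` an edge, the induced subgraph on `{i, i+1, …, j}` is complete. -/
def IsProperInterval {n : ℕ} (G : SimpleGraph (Fin n)) : Prop :=
  ∀ i j : Fin n, i < j → G.Adj i j →
    ∀ a b : Fin n, i ≤ a → a ≤ j → i ≤ b → b ≤ j → a ≠ b → G.Adj a b
private lemma altSplit_key {n : ℕ} :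
    ∀ (l : List (Fin n)), l.Pairwise (· ≤ ·) → ∀ v ∈ l,
      (2 ≤ l.count v → v ∈ (altSplit l).1 ∧ v ∈ (altSplit l).2) ∧
      (Even (l.countP (fun w => decide (w < v))) → v ∈ (altSplit l).1) ∧
      (¬ Even (l.countP (fun w => decide (w < v))) → v ∈ (altSplit l).2)
  | [], _, v, hv => absurd hv List.not_mem_nil
  | a :: t, hs, v, hv => by
    have ht : t.Pairwise (· ≤ ·) := hs.of_cons
    have ha : ∀ x ∈ t, a ≤ x := fun x hx => List.rel_of_pairwise_cons hs hx
    by_cases hva : v = a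
    · subst hva
      have h0 : t.countP (fun w => decide (w < v)) = 0 := by
        rw [List.countP_eq_zero]
        intro x hx
        simpa using not_lt.mpr (ha x hx)
      have hc : (v :: t).countP (fun w => decide (w < v)) = 0 := by
        simp [List.countP_cons, h0]
      refine ⟨?_, ?_, ?_⟩
      · intro h2
        have hcc : (v :: t).count v = t.count v + 1 := List.count_cons_self
        have hvt : v ∈ t := by
          rw [← List.count_pos_iff]
          omega
        have := (altSplit_key t ht v hvt).2.1 (by rw [h0]; exact Even.zero)
        exact ⟨List.mem_cons_self, this⟩
      · intro _
        exact List.mem_cons_self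
      · intro h
        exact absurd (by rw [hc]; exact Even.zero) h
    · have hvt : v ∈ t := (List.mem_cons.mp hv).resolve_left hva
      have hav : a < v := lt_of_le_of_ne (ha v hvt) (fun h => hva h.symm)
      have hcp : (a :: t).countP (fun w => decide (w < v))
          = t.countP (fun w => decide (w < v)) + 1 := by
        simp [List.countP_cons, hav]
      have hcv : (a :: t).count v = t.count v := List.count_cons_of_ne (Ne.symm hva)
      obtain ⟨ih1, ih2, ih3⟩ := altSplit_key t ht v hvt
      refine ⟨?_, ?_, ?_⟩
      · intro h2
        rw [hcv] at h2
        obtain ⟨m1, m2⟩ := ih1 h2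
        exact ⟨List.mem_cons_of_mem a m2, m1⟩
      · intro hE
        rw [hcp, Nat.even_add_one] at hE
        exact List.mem_cons_of_mem a (ih3 hE)
      · intro hE
        rw [hcp, Nat.even_add_one, not_not] at hE
        exact ih2 hE

private lemma countP_lt_split {n : ℕ} (a b : Fin n) (hab : a < b) :
    ∀ l : List (Fin n), l.countP (fun w => decide (w < b)) =
      l.countP (fun w => decide (w < a)) + l.count a
        + l.countP (fun w => decide (a < w ∧ w < b))
  | [] => rfl
  | x :: t => by
    have ih := countP_lt_split a b hab t
    simp only [List.countP_cons, List.count_cons, ih, decide_eq_true_eq]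
    rcases lt_trichotomy x a with h | h | h
    · have h1 : x < b := h.trans hab
      have h2 : ¬ a < x := asymm h
      have h3 : ¬ (x = a) := h.ne
      simp [h, h1, h2, h3]
      omega
    · subst h
      simp [hab, lt_irrefl]
      omega
    · have h2 : ¬ x < a := asymm h
      have h3 : ¬ (x = a) := h.ne'
      by_cases hb : x < b <;> simp [h, h2, h3, hb] <;> omega

/-- let `G` be a proper interval graph on `[n]` and `C_1, C_2` minimal vertex
covers of `G`.  List the multiset union of `C_1` and `C_2` in increasing order as
`i_1 ≤ i_2 ≤ ⋯ ≤ i_k` and let `D_1 = {i_ℓ : ℓ odd}`, `D_2 = {i_ℓ : ℓ even}`.  Then `D_1`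
and `D_2` are vertex covers of `G` (not necessarily minimal a priori). -/
theorem sorted_pair_is_vertex_cover (n : ℕ) (G : SimpleGraph (Fin n))
    (hG : IsProperInterval G) (C₁ C₂ : Finset (Fin n))
    (h₁ : IsMinVertexCover G C₁) (h₂ : IsMinVertexCover G C₂)
    (l : List (Fin n)) (hl : l = (C₁.val + C₂.val).sort (· ≤ ·))
    (D₁ D₂ : Finset (Fin n))
    (hD₁ : D₁ = ((altSplit l).1).toFinset) (hD₂ : D₂ = ((altSplit l).2).toFinset) :
    IsVertexCover G D₁ ∧ IsVertexCover G D₂ := by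
  subst hD₁; subst hD₂
  set m : Multiset (Fin n) := C₁.val + C₂.val with hm
  have hsort : l.Pairwise (· ≤ ·) := hl ▸ Multiset.pairwise_sort (s := m) (r := (· ≤ ·))
  have hml : (l : Multiset (Fin n)) = m := hl ▸ Multiset.sort_eq (s := m) (r := (· ≤ ·))
  have hcount : ∀ v : Fin n, l.count v
      = (if v ∈ C₁ then 1 else 0) + (if v ∈ C₂ then 1 else 0) := by
    intro v
    have h1 : l.count v = m.count v := by rw [← hml, Multiset.coe_count]
    rw [h1, hm, Multiset.count_add]
    congr 1
    · split_ifs with h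
      · exact Multiset.count_eq_one_of_mem C₁.nodup h
      · exact Multiset.count_eq_zero_of_notMem h
    · split_ifs with h
      · exact Multiset.count_eq_one_of_mem C₂.nodup h
      · exact Multiset.count_eq_zero_of_notMem h
  have key : ∀ a b : Fin n, a < b → G.Adj a b →
      ((a ∈ (altSplit l).1.toFinset ∨ b ∈ (altSplit l).1.toFinset) ∧
       (a ∈ (altSplit l).2.toFinset ∨ b ∈ (altSplit l).2.toFinset)) := by
    intro a b hab hadj
    simp only [List.mem_toFinset]
    have hca := hcount a
    have hcb := hcount b
    have hmem2 : ∀ v : Fin n, l.count v = 2 →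
        v ∈ (altSplit l).1 ∧ v ∈ (altSplit l).2 := by
      intro v hv
      have hvl : v ∈ l := by rw [← List.count_pos_iff]; omega
      exact (altSplit_key l hsort v hvl).1 (by omega)
    by_cases hA : a ∈ C₁ ∧ a ∈ C₂
    · obtain ⟨x1, x2⟩ := hmem2 a (by simp [hca, hA.1, hA.2])
      exact ⟨Or.inl x1, Or.inl x2⟩
    by_cases hB : b ∈ C₁ ∧ b ∈ C₂
    · obtain ⟨x1, x2⟩ := hmem2 b (by simp [hcb, hB.1, hB.2])
      exact ⟨Or.inr x1, Or.inr x2⟩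
    by_cases hA0 : a ∉ C₁ ∧ a ∉ C₂
    · exact absurd ⟨(h₁.1 a b hadj).resolve_left hA0.1,
        (h₂.1 a b hadj).resolve_left hA0.2⟩ hB
    by_cases hB0 : b ∉ C₁ ∧ b ∉ C₂
    · exact absurd ⟨(h₁.1 a b hadj).resolve_right hB0.1,
        (h₂.1 a b hadj).resolve_right hB0.2⟩ hA
    push_neg at hA hB hA0 hB0
    have hpat : (a ∈ C₁ ∧ a ∉ C₂ ∧ b ∉ C₁ ∧ b ∈ C₂) ∨
        (a ∉ C₁ ∧ a ∈ C₂ ∧ b ∈ C₁ ∧ b ∉ C₂) := by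
      rcases Decidable.em (a ∈ C₁) with h1 | h1
      · have h2 := hA h1
        have h4 : b ∈ C₂ := (h₂.1 a b hadj).resolve_left h2
        have h3 : b ∉ C₁ := fun hb1 => (hB hb1) h4
        exact Or.inl ⟨h1, h2, h3, h4⟩
      · have h2 : a ∈ C₂ := hA0 h1
        have h3 : b ∈ C₁ := (h₁.1 a b hadj).resolve_left h1
        have h4 : b ∉ C₂ := hB h3
        exact Or.inr ⟨h1, h2, h3, h4⟩
    have hIoo : ∀ w : Fin n, a < w → w < b → w ∈ C₁ ∧ w ∈ C₂ := by
      intro w hw1 hw2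
      have hadjaw : G.Adj a w := hG a b hab hadj a w le_rfl hab.le hw1.le hw2.le hw1.ne
      have hadjwb : G.Adj w b := hG a b hab hadj w b hw1.le hw2.le hab.le le_rfl hw2.ne
      rcases hpat with ⟨p1, p2, p3, p4⟩ | ⟨p1, p2, p3, p4⟩
      · exact ⟨(h₁.1 w b hadjwb).resolve_right p3, (h₂.1 a w hadjaw).resolve_left p2⟩
      · exact ⟨(h₁.1 a w hadjaw).resolve_left p1, (h₂.1 w b hadjwb).resolve_right p4⟩
    have hfa : l.count a = 1 := by
      rcases hpat with ⟨p1, p2, -, -⟩ | ⟨p1, p2, -, -⟩ <;> simp [hca, p1, p2]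
    have hfb : l.count b = 1 := by
      rcases hpat with ⟨-, -, p3, p4⟩ | ⟨-, -, p3, p4⟩ <;> simp [hcb, p3, p4]
    have hmid : l.countP (fun w => decide (a < w ∧ w < b))
        = 2 * (Finset.Ioo a b).card := by
      have h1 : l.countP (fun w => decide (a < w ∧ w < b))
          = Multiset.countP (fun w => a < w ∧ w < b) m := by
        rw [← hml, Multiset.coe_countP]
      have hfilt : ∀ C : Finset (Fin n), (∀ w ∈ Finset.Ioo a b, w ∈ C) →
          Multiset.countP (fun w => a < w ∧ w < b) C.val = (Finset.Ioo a b).card := by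
        intro C hC
        have hfeq : C.filter (fun w => a < w ∧ w < b) = Finset.Ioo a b := by
          ext w
          simp only [Finset.mem_filter, Finset.mem_Ioo]
          exact ⟨fun h => h.2, fun h => ⟨hC w (Finset.mem_Ioo.mpr h), h⟩⟩
        calc Multiset.countP (fun w => a < w ∧ w < b) C.val
            = Multiset.card (C.val.filter (fun w => a < w ∧ w < b)) :=
              Multiset.countP_eq_card_filter _ _
          _ = (C.filter (fun w => a < w ∧ w < b)).card := by
              rw [← Finset.filter_val]; rfl
          _ = (Finset.Ioo a b).card := by rw [hfeq]
      rw [h1, hm, Multiset.countP_add,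
        hfilt C₁ (fun w hw => (hIoo w (Finset.mem_Ioo.mp hw).1 (Finset.mem_Ioo.mp hw).2).1),
        hfilt C₂ (fun w hw => (hIoo w (Finset.mem_Ioo.mp hw).1 (Finset.mem_Ioo.mp hw).2).2)]
      ring
    have hsplit := countP_lt_split a b hab l
    rw [hfa, hmid] at hsplit
    have hal : a ∈ l := by rw [← List.count_pos_iff]; omega
    have hbl : b ∈ l := by rw [← List.count_pos_iff]; omega
    obtain ⟨-, ka2, ka3⟩ := altSplit_key l hsort a hal
    obtain ⟨-, kb2, kb3⟩ := altSplit_key l hsort b hbl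
    by_cases hEa : Even (l.countP (fun w => decide (w < a)))
    · have hEb : ¬ Even (l.countP (fun w => decide (w < b))) := by
        rw [Nat.even_iff] at hEa ⊢; omega
      exact ⟨Or.inl (ka2 hEa), Or.inr (kb3 hEb)⟩
    · have hEb : Even (l.countP (fun w => decide (w < b))) := by
        rw [Nat.even_iff] at hEa ⊢; omega
      exact ⟨Or.inr (kb2 hEb), Or.inl (ka3 hEa)⟩
  constructor <;> intro a b hadj
  · rcases lt_trichotomy a b with h | h | h
    · exact (key a b h hadj).1
    · exact absurd (h ▸ hadj) (G.irrefl)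
    · exact ((key b a h hadj.symm).1).symm
  · rcases lt_trichotomy a b with h | h | h
    · exact (key a b h hadj).2
    · exact absurd (h ▸ hadj) (G.irrefl)
    · exact ((key b a h hadj.symm).2).symm
end

section
/- Let G be a finite simple graph with clique partition π = (V_1,…,V_m) and let r_1,…,r_m be positive integers, and let G' = G^π(r_1,…,r_m) be the associated clique multi-whiskered graph. A subset C' of the vertex set of G' is a minimal vertex cover of G' if and only if there exists a vertex cover C of G (not necessarily minimal) such that C' = C ∪ ⋃_{i : V_i ⊄ C} {z_1^{(i)},…,z_{r_i}^{(i)}}. -/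
/-- The clique multi-whiskered graph `G^π(r_1,…,r_m)`: to each part `V_i = π⁻¹(i)` of the
clique partition `π` we attach `r i` new whisker vertices `z_1^{(i)}, …, z_{r_i}^{(i)}`
(encoded as `Sum.inr ⟨i, k⟩`), each joined to every vertex of `V_i`. -/
def cliqueWhisker {V : Type*} {m : ℕ} (G : SimpleGraph V) (π : V → Fin m)
    (r : Fin m → ℕ) : SimpleGraph (V ⊕ (Σ i : Fin m, Fin (r i))) :=
  SimpleGraph.fromRel (fun a b =>
    match a, b with
    | Sum.inl v, Sum.inl w => G.Adj v w
    | Sum.inl v, Sum.inr p => π v = p.1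
    | Sum.inr _, _ => False)

/-- The minimal vertex cover of `G^π(r_1,…,r_m)` attached to a vertex cover `C` of `G`:
`C' = C ∪ ⋃_{i : V_i ⊄ C} {z_1^{(i)}, …, z_{r_i}^{(i)}}`. -/
def whiskCover {V : Type*} [Fintype V] [DecidableEq V] {m : ℕ} (π : V → Fin m)
    (r : Fin m → ℕ) (C : Finset V) : Finset (V ⊕ (Σ i : Fin m, Fin (r i))) :=
  C.image Sum.inl ∪
    (Finset.univ.filter (fun p : Σ i : Fin m, Fin (r i) =>
      ¬ (Finset.univ.filter (fun v => π v = p.1) ⊆ C))).image Sum.inr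

lemma mem_whisk_inl {V : Type*} [Fintype V] [DecidableEq V] {m : ℕ} (π : V → Fin m)
    (r : Fin m → ℕ) (C : Finset V) (v : V) :
    Sum.inl v ∈ whiskCover π r C ↔ v ∈ C := by
  simp [whiskCover]

lemma mem_whisk_inr {V : Type*} [Fintype V] [DecidableEq V] {m : ℕ} (π : V → Fin m)
    (r : Fin m → ℕ) (C : Finset V) (p : Σ i : Fin m, Fin (r i)) :
    Sum.inr p ∈ whiskCover π r C ↔ ∃ v, π v = p.1 ∧ v ∉ C := by
  simp [whiskCover, Finset.subset_iff]

lemma adj_inl_inl {V : Type*} {m : ℕ} (G : SimpleGraph V) (π : V → Fin m)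
    (r : Fin m → ℕ) (v w : V) :
    (cliqueWhisker G π r).Adj (Sum.inl v) (Sum.inl w) ↔ G.Adj v w := by
  simp only [cliqueWhisker, SimpleGraph.fromRel_adj]
  constructor
  · rintro ⟨-, h | h⟩
    · exact h
    · exact h.symm
  · intro h
    exact ⟨by simpa using h.ne, Or.inl h⟩

lemma adj_inl_inr {V : Type*} {m : ℕ} (G : SimpleGraph V) (π : V → Fin m)
    (r : Fin m → ℕ) (v : V) (p : Σ i : Fin m, Fin (r i)) :
    (cliqueWhisker G π r).Adj (Sum.inl v) (Sum.inr p) ↔ π v = p.1 := by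
  simp only [cliqueWhisker, SimpleGraph.fromRel_adj]
  constructor
  · rintro ⟨-, h | h⟩
    · exact h
    · exact h.elim
  · intro h
    exact ⟨by simp, Or.inl h⟩

lemma not_adj_inr_inr {V : Type*} {m : ℕ} (G : SimpleGraph V) (π : V → Fin m)
    (r : Fin m → ℕ) (p q : Σ i : Fin m, Fin (r i)) :
    ¬ (cliqueWhisker G π r).Adj (Sum.inr p) (Sum.inr q) := by
  simp [cliqueWhisker, SimpleGraph.fromRel_adj]

/-- a subset `C'` of the vertex set of the clique multi-whiskered graph
`G' = G^π(r_1,…,r_m)` is a minimal vertex cover of `G'` if and only if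
`C' = C ∪ ⋃_{i : V_i ⊄ C} {z_1^{(i)},…,z_{r_i}^{(i)}}` for some (not necessarily minimal)
vertex cover `C` of `G`. -/
theorem minimal_vertex_covers_of_cliqueWhisker
    {V : Type*} [Fintype V] [DecidableEq V] {m : ℕ}
    (G : SimpleGraph V) (π : V → Fin m)
    (hclique : ∀ v w : V, π v = π w → v ≠ w → G.Adj v w)
    (r : Fin m → ℕ) (hr : ∀ i, 0 < r i)
    (C' : Finset (V ⊕ (Σ i : Fin m, Fin (r i)))) :
    IsMinVertexCover (cliqueWhisker G π r) C' ↔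
      ∃ C : Finset V, IsVertexCover G C ∧ C' = whiskCover π r C := by
  constructor
  · rintro ⟨hcov, hmin⟩
    refine ⟨Finset.univ.filter (fun v => Sum.inl v ∈ C'), ?_, ?_⟩
    · intro a b hab
      rcases hcov _ _ ((adj_inl_inl G π r a b).2 hab) with h | h
      · exact Or.inl (by simpa using h)
      · exact Or.inr (by simpa using h)
    · ext x
      cases x with
      | inl v => simp [mem_whisk_inl]
      | inr p =>
        rw [mem_whisk_inr]
        constructor
        · intro hp
          by_contra hcon
          push_neg at hcon
          have hall : ∀ v, π v = p.1 → Sum.inl v ∈ C' := by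
            intro v hv
            have := hcon v hv
            simpa using this
          have hDcov : IsVertexCover (cliqueWhisker G π r) (C'.erase (Sum.inr p)) := by
            intro a b hab
            rcases hcov a b hab with h | h
            · by_cases ha : a = Sum.inr p
              · subst ha
                cases b with
                | inl w =>
                  have hw : π w = p.1 := (adj_inl_inr G π r w p).1 hab.symm
                  exact Or.inr (Finset.mem_erase.2 ⟨by simp, hall w hw⟩)
                | inr q => exact absurd hab (not_adj_inr_inr G π r p q)
              · exact Or.inl (Finset.mem_erase.2 ⟨ha, h⟩)
            · by_cases hb : b = Sum.inr p
              · subst hb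
                cases a with
                | inl w =>
                  have hw : π w = p.1 := (adj_inl_inr G π r w p).1 hab
                  exact Or.inl (Finset.mem_erase.2 ⟨by simp, hall w hw⟩)
                | inr q => exact absurd hab (not_adj_inr_inr G π r q p)
              · exact Or.inr (Finset.mem_erase.2 ⟨hb, h⟩)
          have heq := hmin _ (Finset.erase_subset _ _) hDcov
          rw [← heq] at hp
          simp at hp
        · rintro ⟨v, hv, hvC⟩
          have hvC' : Sum.inl v ∉ C' := by simpa using hvC
          rcases hcov _ _ ((adj_inl_inr G π r v p).2 hv) with h | h
          · exact absurd h hvC'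
          · exact h
  · rintro ⟨C, hC, rfl⟩
    constructor
    · intro a b hab
      cases a with
      | inl v =>
        cases b with
        | inl w =>
          rcases hC v w ((adj_inl_inl G π r v w).1 hab) with h | h
          · exact Or.inl ((mem_whisk_inl π r C v).2 h)
          · exact Or.inr ((mem_whisk_inl π r C w).2 h)
        | inr p =>
          have hv : π v = p.1 := (adj_inl_inr G π r v p).1 hab
          by_cases h : ∀ w, π w = p.1 → w ∈ C
          · exact Or.inl ((mem_whisk_inl π r C v).2 (h v hv))
          · push_neg at h
            obtain ⟨w, hw1, hw2⟩ := h
            exact Or.inr ((mem_whisk_inr π r C p).2 ⟨w, hw1, hw2⟩)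
      | inr p =>
        cases b with
        | inl v =>
          have hv : π v = p.1 := (adj_inl_inr G π r v p).1 hab.symm
          by_cases h : ∀ w, π w = p.1 → w ∈ C
          · exact Or.inr ((mem_whisk_inl π r C v).2 (h v hv))
          · push_neg at h
            obtain ⟨w, hw1, hw2⟩ := h
            exact Or.inl ((mem_whisk_inr π r C p).2 ⟨w, hw1, hw2⟩)
        | inr q => exact absurd hab (not_adj_inr_inr G π r p q)
    · intro D hD hDcov
      refine Finset.Subset.antisymm hD (fun x hx => ?_)
      cases x with
      | inr p =>
        obtain ⟨v, hv, hvC⟩ := (mem_whisk_inr π r C p).1 hx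
        have hvD : Sum.inl v ∉ D := fun h => hvC ((mem_whisk_inl π r C v).1 (hD h))
        rcases hDcov _ _ ((adj_inl_inr G π r v p).2 hv) with h | h
        · exact absurd h hvD
        · exact h
      | inl v =>
        have hvC : v ∈ C := (mem_whisk_inl π r C v).1 hx
        set p : Σ i : Fin m, Fin (r i) := ⟨π v, ⟨0, hr (π v)⟩⟩ with hp
        by_cases h : ∀ w, π w = π v → w ∈ C
        · have hpC : Sum.inr p ∉ whiskCover π r C := by
            rw [mem_whisk_inr]
            rintro ⟨w, hw1, hw2⟩
            exact hw2 (h w hw1)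
          have hpD : Sum.inr p ∉ D := fun hh => hpC (hD hh)
          rcases hDcov _ _ ((adj_inl_inr G π r v p).2 rfl) with hh | hh
          · exact hh
          · exact absurd hh hpD
        · push_neg at h
          obtain ⟨w, hw1, hw2⟩ := h
          have hwv : v ≠ w := fun e => hw2 (e ▸ hvC)
          have hadj : G.Adj v w := hclique v w hw1.symm hwv
          have hwD : Sum.inl w ∉ D := fun hh => hw2 ((mem_whisk_inl π r C w).1 (hD hh))
          rcases hDcov _ _ ((adj_inl_inl G π r v w).2 hadj) with hh | hh
          · exact hh
          · exact absurd hh hwD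
end

section
/- Let G be a finite simple graph, π = (V_1,…,V_m) an arbitrary clique partition of G, and r_1,…,r_m positive integers. Let K be a field and let I be the vertex cover ideal of the clique multi-whiskered graph G^π(r_1,…,r_m) in the polynomial ring over K whose variables are indexed by the vertices of G^π(r_1,…,r_m). Then for every positive integer k, the power I^k has linear quotients: there exist monomials h_1,…,h_s generating I^k such that for every i with 2 ≤ i ≤ s, the colon ideal (h_1,…,h_{i−1}) : (h_i) is generated by a subset of the variables. -/
open MvPolynomial

set_option linter.unusedSectionVars false
set_option linter.unusedVariables false
set_option maxHeartbeats 1000000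

namespace CW

variable {V : Type*} [Fintype V] [DecidableEq V] {m : ℕ}
  {G : SimpleGraph V} {π : V → Fin m} {r : Fin m → ℕ}

/-- the indicator finsupp of a finset -/
noncomputable def ind {α : Type*} (C : Finset α) : α →₀ ℕ := ∑ w ∈ C, Finsupp.single w 1

lemma ind_apply {α : Type*} [DecidableEq α] (C : Finset α) (w : α) :
    ind C w = if w ∈ C then 1 else 0 := by
  classical
  rw [ind, Finset.sum_apply']
  simp [Finsupp.single_apply]

lemma prod_X_eq {K : Type*} [CommSemiring K] {α : Type*} (C : Finset α) :
    (∏ w ∈ C, (X w : MvPolynomial α K)) = monomial (ind C) 1 := by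
  classical
  induction C using Finset.induction_on with
  | empty => simp [ind]
  | insert _ _ hx ih =>
      rw [Finset.prod_insert hx, ih]
      show monomial (Finsupp.single _ 1) 1 * _ = _
      rw [monomial_mul, one_mul, ind, ind, Finset.sum_insert hx]

lemma mem_whiskCover_inl {C : Finset V} {v : V} :
    Sum.inl v ∈ whiskCover π r C ↔ v ∈ C := by
  simp [whiskCover]

lemma mem_whiskCover_inr {C : Finset V} {p : Σ i : Fin m, Fin (r i)} :
    Sum.inr p ∈ whiskCover π r C ↔ ¬ (Finset.univ.filter (fun v => π v = p.1) ⊆ C) := by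
  simp [whiskCover]

lemma cw_adj_inl_inl {v w : V} :
    (cliqueWhisker G π r).Adj (Sum.inl v) (Sum.inl w) ↔ G.Adj v w := by
  constructor
  · rintro ⟨-, h | h⟩
    · exact h
    · exact h.symm
  · intro h
    exact ⟨fun e => h.ne (Sum.inl.inj e), Or.inl h⟩

lemma cw_adj_inl_inr {v : V} {p : Σ i : Fin m, Fin (r i)} :
    (cliqueWhisker G π r).Adj (Sum.inl v) (Sum.inr p) ↔ π v = p.1 := by
  constructor
  · rintro ⟨-, h | h⟩
    · exact h
    · exact h.elim
  · intro h
    exact ⟨by simp, Or.inl h⟩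

lemma cw_not_adj_inr_inr {p q : Σ i : Fin m, Fin (r i)} :
    ¬ (cliqueWhisker G π r).Adj (Sum.inr p) (Sum.inr q) := by
  rintro ⟨-, h | h⟩ <;> exact h


/-- the fiber of the clique partition over `i` -/
def fib (π : V → Fin m) (i : Fin m) : Finset V := Finset.univ.filter (fun v => π v = i)

lemma whiskCover_isCover {D : Finset V} (hD : IsVertexCover G D) :
    IsVertexCover (cliqueWhisker G π r) (whiskCover π r D) := by
  rintro (a | a) (b | b) hab
  · rcases hD a b (cw_adj_inl_inl.1 hab) with h | h
    · exact Or.inl (mem_whiskCover_inl.2 h)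
    · exact Or.inr (mem_whiskCover_inl.2 h)
  · by_cases h : a ∈ D
    · exact Or.inl (mem_whiskCover_inl.2 h)
    · refine Or.inr (mem_whiskCover_inr.2 ?_)
      intro hsub
      exact h (hsub (by simp [cw_adj_inl_inr.1 hab]))
  · by_cases h : b ∈ D
    · exact Or.inr (mem_whiskCover_inl.2 h)
    · refine Or.inl (mem_whiskCover_inr.2 ?_)
      intro hsub
      exact h (hsub (by simp [cw_adj_inl_inr.1 hab.symm]))
  · exact absurd hab cw_not_adj_inr_inr

lemma whiskCover_isMinCover
    (hclique : ∀ v w : V, π v = π w → v ≠ w → G.Adj v w) (hr : ∀ i, 0 < r i)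
    {D : Finset V} (hD : IsVertexCover G D) :
    IsMinVertexCover (cliqueWhisker G π r) (whiskCover π r D) := by
  refine ⟨whiskCover_isCover hD, fun D' hsub hcov => Finset.Subset.antisymm hsub ?_⟩
  rintro (v | p) hw
  · have hv : v ∈ D := mem_whiskCover_inl.1 hw
    by_cases hfib : Finset.univ.filter (fun u => π u = π v) ⊆ D
    · -- use a whisker vertex
      have hadj : (cliqueWhisker G π r).Adj (Sum.inl v) (Sum.inr ⟨π v, ⟨0, hr (π v)⟩⟩) :=
        cw_adj_inl_inr.2 rfl
      rcases hcov _ _ hadj with h | h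
      · exact h
      · exfalso
        exact (mem_whiskCover_inr.1 (hsub h)) hfib
    · obtain ⟨w, hwmem, hwD⟩ := Finset.not_subset.1 hfib
      have hπ : π w = π v := by simpa using (Finset.mem_filter.1 hwmem).2
      have hne : w ≠ v := fun e => hwD (e ▸ hv)
      have hadj : (cliqueWhisker G π r).Adj (Sum.inl v) (Sum.inl w) :=
        cw_adj_inl_inl.2 (hclique v w hπ.symm (Ne.symm hne))
      rcases hcov _ _ hadj with h | h
      · exact h
      · exact absurd (mem_whiskCover_inl.1 (hsub h)) hwD
  · have hfib := mem_whiskCover_inr.1 hw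
    obtain ⟨v, hvmem, hvD⟩ := Finset.not_subset.1 hfib
    have hπ : π v = p.1 := by simpa using (Finset.mem_filter.1 hvmem).2
    have hadj : (cliqueWhisker G π r).Adj (Sum.inl v) (Sum.inr p) := cw_adj_inl_inr.2 hπ
    rcases hcov _ _ hadj with h | h
    · exact absurd (mem_whiskCover_inl.1 (hsub h)) hvD
    · exact h

lemma minCover_eq_whiskCover
    {C : Finset (V ⊕ (Σ i : Fin m, Fin (r i)))}
    (hC : IsMinVertexCover (cliqueWhisker G π r) C) :
    ∃ D : Finset V, IsVertexCover G D ∧ C = whiskCover π r D := by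
  classical
  set D : Finset V := Finset.univ.filter (fun v => Sum.inl v ∈ C) with hDdef
  have hmemD : ∀ v, v ∈ D ↔ Sum.inl v ∈ C := by intro v; simp [hDdef]
  have hDcov : IsVertexCover G D := by
    intro a b hab
    rcases hC.1 _ _ (cw_adj_inl_inl.2 hab) with h | h
    · exact Or.inl ((hmemD a).2 h)
    · exact Or.inr ((hmemD b).2 h)
  refine ⟨D, hDcov, ?_⟩
  have hsub : whiskCover π r D ⊆ C := by
    rintro (v | p) hw
    · exact (hmemD v).1 (mem_whiskCover_inl.1 hw)
    · obtain ⟨v, hvmem, hvD⟩ := Finset.not_subset.1 (mem_whiskCover_inr.1 hw)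
      have hπ : π v = p.1 := by simpa using (Finset.mem_filter.1 hvmem).2
      rcases hC.1 _ _ (cw_adj_inl_inr.2 hπ) with h | h
      · exact absurd ((hmemD v).2 h) hvD
      · exact h
  exact (hC.2 _ hsub (whiskCover_isCover hDcov)).symm


/-- exponent vectors of the minimal generators of the cover ideal -/
def Egen (G : SimpleGraph V) (π : V → Fin m) (r : Fin m → ℕ) :
    Set ((V ⊕ (Σ i : Fin m, Fin (r i))) →₀ ℕ) :=
  {e | ∃ D : Finset V, IsVertexCover G D ∧ e = ind (whiskCover π r D)}

/-- exponent vectors of generators of the `n`-th power -/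
def Ek {α : Type*} (E : Set (α →₀ ℕ)) : ℕ → Set (α →₀ ℕ)
  | 0 => {0}
  | n+1 => {f | ∃ a ∈ Ek E n, ∃ b ∈ E, f = a + b}

lemma span_monomial_pow {K : Type*} [CommSemiring K] {α : Type*}
    (E : Set (α →₀ ℕ)) (n : ℕ) :
    (Ideal.span ((fun s => (monomial s (1 : K) : MvPolynomial α K)) '' E)) ^ n
      = Ideal.span ((fun s => monomial s (1 : K)) '' Ek E n) := by
  induction n with
  | zero =>
      rw [pow_zero, Ek]
      simp [Ideal.span_singleton_one]
  | succ n ih =>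
      rw [pow_succ, ih, Ideal.span_mul_span']
      congr 1
      ext x
      constructor
      · rintro ⟨a, ⟨ea, hea, rfl⟩, b, ⟨eb, heb, rfl⟩, rfl⟩
        exact ⟨ea + eb, ⟨ea, hea, eb, heb, rfl⟩, by simp [monomial_mul]⟩
      · rintro ⟨e, ⟨ea, hea, eb, heb, rfl⟩, rfl⟩
        exact ⟨monomial ea 1, ⟨ea, hea, rfl⟩, monomial eb 1, ⟨eb, heb, rfl⟩,
          by simp [monomial_mul]⟩

lemma Egen_apply_le_one {e : (V ⊕ (Σ i : Fin m, Fin (r i))) →₀ ℕ}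
    (he : e ∈ Egen G π r) (w) : e w ≤ 1 := by
  obtain ⟨D, -, rfl⟩ := he
  rw [ind_apply]
  split <;> omega

lemma Ek_apply_le {n : ℕ} {f : (V ⊕ (Σ i : Fin m, Fin (r i))) →₀ ℕ}
    (hf : f ∈ Ek (Egen G π r) n) (w) : f w ≤ n := by
  induction n generalizing f with
  | zero =>
      rw [Ek, Set.mem_singleton_iff] at hf
      subst hf; simp
  | succ n ih =>
      obtain ⟨a, ha, b, hb, rfl⟩ := hf
      have := ih ha
      have := Egen_apply_le_one hb w
      simp only [Finsupp.add_apply]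
      omega

lemma Egen_fiber_sum (hclique : ∀ v w : V, π v = π w → v ≠ w → G.Adj v w)
    {e : (V ⊕ (Σ i : Fin m, Fin (r i))) →₀ ℕ} (he : e ∈ Egen G π r)
    (i : Fin m) (z : Fin (r i)) :
    (∑ v ∈ fib π i, e (Sum.inl v)) + e (Sum.inr ⟨i, z⟩) = (fib π i).card := by
  obtain ⟨D, hD, rfl⟩ := he
  have hsum : (∑ v ∈ fib π i, ind (whiskCover π r D) (Sum.inl v))
      = ((fib π i).filter (· ∈ D)).card := by
    rw [Finset.card_filter]
    refine Finset.sum_congr rfl fun v _ => ?_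
    rw [ind_apply]
    simp [mem_whiskCover_inl]
  rw [hsum, ind_apply]
  simp only [mem_whiskCover_inr]
  by_cases hsub : Finset.filter (fun v => π v = i) Finset.univ ⊆ D
  · rw [if_neg (not_not_intro hsub)]
    have hall : ∀ x ∈ fib π i, x ∈ D := fun v hv => hsub hv
    rw [Finset.filter_true_of_mem hall, Nat.add_zero]
  · rw [if_pos hsub]
    have hcard : ((fib π i).filter (· ∉ D)).card = 1 := by
      obtain ⟨v, hv, hvD⟩ := Finset.not_subset.1 hsub
      refine Finset.card_eq_one.2 ⟨v, ?_⟩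
      ext u
      simp only [Finset.mem_filter, Finset.mem_singleton]
      constructor
      · rintro ⟨hu, huD⟩
        by_contra hne
        have hadj := hclique u v (by
          have h1 : π u = i := by simpa [fib] using hu
          have h2 : π v = i := by simpa [fib] using hv
          rw [h1, h2]) hne
        rcases hD u v hadj with h | h
        · exact huD h
        · exact hvD h
      · rintro rfl
        exact ⟨hv, hvD⟩
    have := Finset.card_filter_add_card_filter_not (s := fib π i) (p := (· ∈ D))
    omega

lemma Ek_fiber_sum (hclique : ∀ v w : V, π v = π w → v ≠ w → G.Adj v w)
    {n : ℕ} {f : (V ⊕ (Σ i : Fin m, Fin (r i))) →₀ ℕ}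
    (hf : f ∈ Ek (Egen G π r) n) (i : Fin m) (z : Fin (r i)) :
    (∑ v ∈ fib π i, f (Sum.inl v)) + f (Sum.inr ⟨i, z⟩) = n * (fib π i).card := by
  induction n generalizing f with
  | zero =>
      rw [Ek, Set.mem_singleton_iff] at hf
      subst hf; simp
  | succ n ih =>
      obtain ⟨a, ha, b, hb, rfl⟩ := hf
      have h1 := ih ha
      have h2 := Egen_fiber_sum hclique hb i z
      simp only [Finsupp.add_apply, Finset.sum_add_distrib]
      ring_nf
      omega

lemma Ek_eq_of_inl (hclique : ∀ v w : V, π v = π w → v ≠ w → G.Adj v w)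
    (hr : ∀ i, 0 < r i) {n : ℕ} {f g : (V ⊕ (Σ i : Fin m, Fin (r i))) →₀ ℕ}
    (hf : f ∈ Ek (Egen G π r) n) (hg : g ∈ Ek (Egen G π r) n)
    (h : ∀ v, f (Sum.inl v) = g (Sum.inl v)) : f = g := by
  ext w
  rcases w with v | ⟨i, z⟩
  · exact h v
  · have h1 := Ek_fiber_sum hclique hf i z
    have h2 := Ek_fiber_sum hclique hg i z
    have hsum : (∑ v ∈ fib π i, f (Sum.inl v)) = ∑ v ∈ fib π i, g (Sum.inl v) :=
      Finset.sum_congr rfl fun v _ => h v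
    omega

lemma cover_insert {D : Finset V} (hD : IsVertexCover G D) (v : V) :
    IsVertexCover G (insert v D) := by
  intro a b hab
  rcases hD a b hab with h | h
  · exact Or.inl (Finset.mem_insert_of_mem h)
  · exact Or.inr (Finset.mem_insert_of_mem h)

lemma exchange {n : ℕ} {f : (V ⊕ (Σ i : Fin m, Fin (r i))) →₀ ℕ}
    (hf : f ∈ Ek (Egen G π r) n) {v : V} (hlt : f (Sum.inl v) < n) :
    ∃ f' ∈ Ek (Egen G π r) n, f' (Sum.inl v) = f (Sum.inl v) + 1 ∧
      (∀ w : V, w ≠ v → f' (Sum.inl w) = f (Sum.inl w)) ∧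
      (∀ p, f' (Sum.inr p) ≤ f (Sum.inr p)) := by
  induction n generalizing f with
  | zero => omega
  | succ n ih =>
      obtain ⟨a, ha, b, ⟨D, hD, rfl⟩, rfl⟩ := hf
      by_cases hv : v ∈ D
      · have hb1 : ind (whiskCover π r D) (Sum.inl v) = 1 := by
          rw [ind_apply, if_pos (mem_whiskCover_inl.2 hv)]
        have halt : a (Sum.inl v) < n := by
          have := hlt
          simp only [Finsupp.add_apply, hb1] at this
          omega
        obtain ⟨a', ha', h1, h2, h3⟩ := ih ha halt
        refine ⟨a' + ind (whiskCover π r D), ⟨a', ha', _, ⟨D, hD, rfl⟩, rfl⟩, ?_, ?_, ?_⟩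
        · simp only [Finsupp.add_apply, h1]; omega
        · intro w hw; simp only [Finsupp.add_apply, h2 w hw]
        · intro p; simp only [Finsupp.add_apply]; exact Nat.add_le_add_right (h3 p) _
      · refine ⟨a + ind (whiskCover π r (insert v D)),
          ⟨a, ha, _, ⟨insert v D, cover_insert hD v, rfl⟩, rfl⟩, ?_, ?_, ?_⟩
        · simp only [Finsupp.add_apply, ind_apply,
            if_pos (mem_whiskCover_inl.2 (Finset.mem_insert_self v D)),
            if_neg (fun h => hv (mem_whiskCover_inl.1 h))]
        · intro w hw
          simp only [Finsupp.add_apply, ind_apply, mem_whiskCover_inl,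
            Finset.mem_insert, or_iff_right hw]
        · intro p
          simp only [Finsupp.add_apply, ind_apply, mem_whiskCover_inr]
          refine Nat.add_le_add_left ?_ _
          by_cases h2 : Finset.filter (fun u => π u = p.fst) Finset.univ ⊆ D
          · have hsub2 : Finset.filter (fun u => π u = p.fst) Finset.univ ⊆ insert v D :=
              fun x hx => Finset.mem_insert_of_mem (h2 hx)
            rw [if_neg (not_not_intro h2), if_neg (not_not_intro hsub2)]
          · rw [if_pos h2]
            split <;> omega


/-- total degree on the original vertices -/
def degV (f : (V ⊕ (Σ i : Fin m, Fin (r i))) →₀ ℕ) : ℕ := ∑ v : V, f (Sum.inl v)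

lemma Ek_finite {α : Type*} {E : Set (α →₀ ℕ)} (hE : E.Finite) (n : ℕ) :
    (Ek E n).Finite := by
  induction n with
  | zero => exact Set.finite_singleton 0
  | succ n ih =>
      refine (Set.Finite.image2 (· + ·) ih hE).subset ?_
      rintro f ⟨a, ha, b, hb, rfl⟩
      exact Set.mem_image2_of_mem ha hb

end CW


/-- Theorem 3.2: let `G` be a finite simple graph, `π` a clique partition of
`G`, `r_1, …, r_m` positive integers and `K` a field.  Then every power `I^k` (`k ≥ 1`) of the
vertex cover ideal `I` of the clique multi-whiskered graph `G^π(r_1,…,r_m)` has linear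
quotients: there are monomials `h_1, …, h_s` generating `I^k` such that each colon ideal
`(h_1,…,h_{i−1}) : (h_i)` is generated by a subset of the variables. -/
theorem cover_ideal_powers_of_cliqueWhisker_linear_quotients
    {V : Type*} [Fintype V] [DecidableEq V] {m : ℕ}
    (K : Type*) [Field K]
    (G : SimpleGraph V) (π : V → Fin m)
    (hclique : ∀ v w : V, π v = π w → v ≠ w → G.Adj v w)
    (r : Fin m → ℕ) (hr : ∀ i, 0 < r i)
    (I : Ideal (MvPolynomial (V ⊕ (Σ i : Fin m, Fin (r i))) K))
    (hI : I = Ideal.span { f | ∃ C : Finset (V ⊕ (Σ i : Fin m, Fin (r i))),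
      IsMinVertexCover (cliqueWhisker G π r) C ∧ f = ∏ w ∈ C, X w })
    (k : ℕ) (hk : 0 < k) :
    ∃ (s : ℕ) (h : Fin s → MvPolynomial (V ⊕ (Σ i : Fin m, Fin (r i))) K),
      (∀ i : Fin s, ∃ c : (V ⊕ (Σ i : Fin m, Fin (r i))) →₀ ℕ,
        h i = MvPolynomial.monomial c 1) ∧
      Ideal.span (Set.range h) = I ^ k ∧
      ∀ i : Fin s, ∃ S : Set (V ⊕ (Σ i : Fin m, Fin (r i))),
        (Ideal.span { g | ∃ j : Fin s, j < i ∧ g = h j }).colon (Ideal.span {h i})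
          = Ideal.span (MvPolynomial.X '' S) := by
  classical
  -- the generating set of `I` as a monomial family
  have hgen : { f | ∃ C : Finset (V ⊕ (Σ i : Fin m, Fin (r i))),
      IsMinVertexCover (cliqueWhisker G π r) C ∧ f = ∏ w ∈ C, X w }
      = (fun s => (monomial s (1 : K) : MvPolynomial _ K)) '' CW.Egen G π r := by
    ext f
    constructor
    · rintro ⟨C, hC, rfl⟩
      obtain ⟨D, hD, rfl⟩ := CW.minCover_eq_whiskCover hC
      exact ⟨_, ⟨D, hD, rfl⟩, (CW.prod_X_eq _).symm⟩
    · rintro ⟨e, ⟨D, hD, rfl⟩, rfl⟩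
      exact ⟨whiskCover π r D, CW.whiskCover_isMinCover hclique hr hD, (CW.prod_X_eq _).symm⟩
  have hIk : I ^ k
      = Ideal.span ((fun s => (monomial s (1 : K) : MvPolynomial _ K)) '' CW.Ek (CW.Egen G π r) k) := by
    rw [hI, hgen, CW.span_monomial_pow]
  set E : Set ((V ⊕ (Σ i : Fin m, Fin (r i))) →₀ ℕ) := CW.Egen G π r with hE
  have hEfin : E.Finite := by
    refine ((Set.finite_univ (α := Finset V)).image
      (fun D => CW.ind (whiskCover π r D))).subset ?_
    rintro e ⟨D, hD, rfl⟩
    exact ⟨D, trivial, rfl⟩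
  have hEkfin : (CW.Ek E k).Finite := CW.Ek_finite hEfin k
  set le : ((V ⊕ (Σ i : Fin m, Fin (r i))) →₀ ℕ) → ((V ⊕ (Σ i : Fin m, Fin (r i))) →₀ ℕ) → Bool :=
    fun f g => decide (CW.degV g ≤ CW.degV f) with hle
  set L : List ((V ⊕ (Σ i : Fin m, Fin (r i))) →₀ ℕ) :=
    (hEkfin.toFinset.toList).mergeSort le with hL
  have hperm : List.Perm L hEkfin.toFinset.toList := List.mergeSort_perm _ _
  have hmemL : ∀ x, x ∈ L ↔ x ∈ CW.Ek E k := by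
    intro x
    rw [hperm.mem_iff, Finset.mem_toList, Set.Finite.mem_toFinset]
  have hnodup : L.Nodup := hperm.nodup_iff.2 (Finset.nodup_toList _)
  have hsorted : L.Pairwise (fun f g => CW.degV g ≤ CW.degV f) := by
    have H := List.pairwise_mergeSort (le := le)
      (fun a b c h1 h2 => by
        simp only [hle, decide_eq_true_eq] at h1 h2 ⊢; omega)
      (fun a b => by
        simp only [hle, Bool.or_eq_true, decide_eq_true_eq]; omega)
      hEkfin.toFinset.toList
    rw [← hL] at H
    exact H.imp (by simp only [hle, decide_eq_true_eq]; exact fun h => h)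
  -- membership of list entries
  have hgetEk : ∀ i : Fin L.length, L.get i ∈ CW.Ek E k :=
    fun i => (hmemL _).1 (L.get_mem _)
  refine ⟨L.length, fun i => monomial (L.get i) 1, fun i => ⟨L.get i, rfl⟩, ?_, ?_⟩
  · -- span = I^k
    rw [hIk]
    congr 1
    ext x
    constructor
    · rintro ⟨i, rfl⟩
      exact ⟨L.get i, hgetEk i, rfl⟩
    · rintro ⟨e, he, rfl⟩
      obtain ⟨i, rfl⟩ := List.mem_iff_get.1 ((hmemL e).2 he)
      exact ⟨i, rfl⟩
  · -- linear quotients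
    intro i
    set u : (V ⊕ (Σ i : Fin m, Fin (r i))) →₀ ℕ := L.get i with hu
    refine ⟨{x | ∃ j : Fin L.length, j < i ∧ L.get j ≤ u + Finsupp.single x 1}, ?_⟩
    have hA : {g | ∃ j : Fin L.length, j < i ∧ g = (fun i' => (monomial (L.get i') (1:K))) j}
        = (fun s => (monomial s (1 : K) : MvPolynomial _ K)) ''
            {a | ∃ j : Fin L.length, j < i ∧ a = L.get j} := by
      ext g
      constructor
      · rintro ⟨j, hj, rfl⟩
        exact ⟨L.get j, ⟨j, hj, rfl⟩, rfl⟩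
      · rintro ⟨a, ⟨j, hj, rfl⟩, rfl⟩
        exact ⟨j, hj, rfl⟩
    ext f
    rw [Ideal.mem_colon_span_singleton, hA, mem_ideal_span_monomial_image,
      mem_ideal_span_X_image]
    have hsupp : ∀ c, c ∈ (f * monomial u (1:K)).support ↔ u ≤ c ∧ c - u ∈ f.support := by
      intro c
      rw [mem_support_iff, coeff_mul_monomial', mem_support_iff]
      split_ifs with h
      · simp [h]
      · simp [h]
    constructor
    · -- colon → variables
      intro hcol d hd
      obtain ⟨a, ⟨j, hji, rfl⟩, hle'⟩ := hcol (d + u) (by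
        rw [hsupp]
        exact ⟨le_add_self, by rwa [add_tsub_cancel_right]⟩)
      -- find a vertex where `L.get j` exceeds `u`
      have hne : L.get j ≠ u := by
        intro e
        exact absurd (hnodup.get_inj_iff.1 e) (ne_of_lt hji)
      have hdeg : CW.degV u ≤ CW.degV (L.get j) := by
        have := List.pairwise_iff_getElem.1 hsorted j i j.2 i.2 hji
        simpa [hu] using this
      have hv : ∃ v : V, u (Sum.inl v) < L.get j (Sum.inl v) := by
        by_contra hcon
        push_neg at hcon
        have hsum : CW.degV (L.get j) = CW.degV u := by
          have h1 : CW.degV (L.get j) ≤ CW.degV u :=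
            Finset.sum_le_sum (fun v _ => hcon v)
          omega
        have heq : ∀ v, L.get j (Sum.inl v) = u (Sum.inl v) := by
          have hsum' : ∑ v : V, u (Sum.inl v) = ∑ v : V, L.get j (Sum.inl v) := by
            unfold CW.degV at hsum
            omega
          have H := (Finset.sum_eq_sum_iff_of_le (fun v _ => hcon v)).1 hsum'.symm
          exact fun v => H v (Finset.mem_univ v)
        exact hne (CW.Ek_eq_of_inl hclique hr (hgetEk j) (hgetEk i) heq)
      obtain ⟨v, hvlt⟩ := hv
      have hdv : d (Sum.inl v) ≠ 0 := by
        have := hle' (Sum.inl v)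
        simp only [Finsupp.add_apply] at this
        omega
      have hulk : u (Sum.inl v) < k := lt_of_lt_of_le hvlt (CW.Ek_apply_le (hgetEk j) _)
      obtain ⟨f', hf', h1, h2, h3⟩ := CW.exchange (hgetEk i) hulk
      rw [← hu] at h1 h2 h3
      obtain ⟨t, ht⟩ := List.mem_iff_get.1 ((hmemL f').2 hf')
      have hdegf' : CW.degV f' = CW.degV u + 1 := by
        unfold CW.degV
        rw [← Finset.add_sum_erase _ _ (Finset.mem_univ v),
          ← Finset.add_sum_erase _ (fun w => u (Sum.inl w)) (Finset.mem_univ v), h1]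
        have : ∑ w ∈ Finset.univ.erase v, f' (Sum.inl w)
            = ∑ w ∈ Finset.univ.erase v, u (Sum.inl w) :=
          Finset.sum_congr rfl (fun w hw => h2 w (Finset.mem_erase.1 hw).1)
        omega
      have hti : t < i := by
        rcases lt_trichotomy t i with h | h | h
        · exact h
        · exfalso
          rw [h, ← hu] at ht
          rw [ht] at hdegf'
          omega
        · exfalso
          have hgt : CW.degV (L.get t) ≤ CW.degV (L.get i) := by
            simpa using List.pairwise_iff_getElem.1 hsorted i t i.2 t.2 h
          rw [ht, ← hu] at hgt
          omega
      refine ⟨Sum.inl v, ⟨t, hti, ?_⟩, hdv⟩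
      rw [ht, Finsupp.le_def]
      intro w
      rcases w with w | p
      · by_cases hwv : w = v
        · subst hwv
          simp [Finsupp.add_apply, Finsupp.single_apply, h1]
        · simp [Finsupp.add_apply, Finsupp.single_apply, h2 w hwv, Ne.symm hwv]
      · rw [Finsupp.add_apply]
        exact le_trans (h3 p) (Nat.le_add_right _ _)
    · -- variables → colon
      intro hvar c hc
      rw [hsupp] at hc
      obtain ⟨x, ⟨j, hj, hlej⟩, hdx⟩ := hvar (c - u) hc.2
      refine ⟨L.get j, ⟨j, hj, rfl⟩, ?_⟩
      calc L.get j ≤ u + Finsupp.single x 1 := hlej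
        _ ≤ u + (c - u) := by
            refine add_le_add le_rfl ?_
            rw [Finsupp.single_le_iff]
            omega
        _ = c := by rw [add_comm, tsub_add_cancel_of_le hc.1]
end
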